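/- For every n ≥ 0, the n-th derivative of the Cauchy density f(x) = 1/(π(1 + x²)) has exactly n real zeros, all simple. In particular the Cauchy density is bell-shaped. -/

import Mathlib

open MeasureTheory Set Filter Real


private lemma sub_I_ne (x : ℝ) : (x : ℂ) - Complex.I ≠ 0 := by
  intro h
  have := congrArg Complex.im h
  simp at this

private lemma cauchy_iter_formula (n : ℕ) :
    iteratedDeriv n (fun y : ℝ => 1 / (π * (1 + y ^ 2)))
      = fun x : ℝ => ((-1)^n * (Nat.factorial n) / π) * ((((x:ℂ) - Complex.I) ^ (n+1))⁻¹).im := by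
  induction n with
  | zero =>
    funext x
    simp only [iteratedDeriv_zero, pow_zero, pow_one, Nat.factorial_zero, Nat.cast_one,
      Complex.inv_im]
    rw [Complex.normSq_apply]
    simp
    ring_nf
  | succ n ih =>
    funext x
    rw [iteratedDeriv_succ, ih]
    have hz : ((x:ℂ) - Complex.I) ≠ 0 := sub_I_ne x
    have h2 : HasDerivAt (fun z : ℂ => (z - Complex.I) ^ (-(n+1:ℤ)))
        ((-(n+1:ℤ)) * ((x:ℂ) - Complex.I) ^ (-(n+1:ℤ) - 1)) (x:ℂ) := by
      have := (hasDerivAt_zpow (-(n+1:ℤ)) ((x:ℂ) - Complex.I) (Or.inl hz)).comp (x:ℂ)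
        ((hasDerivAt_id (x:ℂ)).sub_const Complex.I)
      simpa [Function.comp_def] using this
    have h4 : HasDerivAt (fun y : ℝ => (((y:ℂ) - Complex.I) ^ (-(n+1:ℤ))).im)
        (((-(n+1:ℤ)) * ((x:ℂ) - Complex.I) ^ (-(n+1:ℤ) - 1)).im) x :=
      Complex.imCLM.hasFDerivAt.comp_hasDerivAt x h2.comp_ofReal
    have h5 := (h4.const_mul ((-1:ℝ)^n * (Nat.factorial n) / π))
    have heq : (fun x : ℝ => ((-1:ℝ)^n * (Nat.factorial n) / π) * ((((x:ℂ) - Complex.I) ^ (n+1))⁻¹).im)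
        = fun y : ℝ => ((-1:ℝ)^n * (Nat.factorial n) / π) * (((y:ℂ) - Complex.I) ^ (-(n+1:ℤ))).im := by
      funext y
      rw [show (-(n+1:ℤ)) = -(((n+1 : ℕ)) : ℤ) by push_cast; ring, zpow_neg, zpow_natCast]
    rw [heq, h5.deriv]
    have him : (((-(n+1:ℤ)) * ((x:ℂ) - Complex.I) ^ (-(n+1:ℤ) - 1) : ℂ)).im
        = (-(n+1:ℝ)) * (((x:ℂ) - Complex.I) ^ (-(n+1:ℤ) - 1)).im := by
      simp [Complex.mul_im]
    rw [him]
    have hzp : ((x:ℂ) - Complex.I) ^ (-(n+1:ℤ) - 1) = (((x:ℂ) - Complex.I) ^ (n+1+1))⁻¹ := by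
      rw [show (-(n+1:ℤ) - 1) = -(((n+1+1:ℕ)):ℤ) by push_cast; ring, zpow_neg, zpow_natCast]
    rw [hzp]
    push_cast [Nat.factorial_succ]
    ring


private lemma im_pow_cot {θ : ℝ} (hθ : Real.sin θ ≠ 0) (m : ℕ) :
    (((Real.cot θ : ℂ) - Complex.I) ^ m).im = - Real.sin (m * θ) / (Real.sin θ)^m := by
  have hsc : (Complex.sin (θ : ℂ)) ≠ 0 := by
    rw [← Complex.ofReal_sin]
    exact Complex.ofReal_ne_zero.mpr hθ
  have h1 : ((Real.cot θ : ℂ) - Complex.I)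
      = Complex.exp (((-θ : ℝ) : ℂ) * Complex.I) / ((Real.sin θ : ℝ) : ℂ) := by
    rw [Real.cot_eq_cos_div_sin]
    push_cast
    rw [Complex.exp_mul_I, Complex.cos_neg, Complex.sin_neg]
    field_simp
    ring
  rw [h1, div_pow, ← Complex.exp_nat_mul, ← Complex.ofReal_pow,
    show ((m : ℂ)) * (((-θ : ℝ) : ℂ) * Complex.I) = ((-(m * θ) : ℝ) : ℂ) * Complex.I by
      push_cast; ring,
    Complex.div_ofReal_im, Complex.exp_ofReal_mul_I_im, Real.sin_neg, neg_div]

private lemma add_I_ne (x : ℝ) : (x : ℂ) + Complex.I ≠ 0 := by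
  intro h
  have := congrArg Complex.im h
  simp at this

private lemma arg_mem_Ioo (x : ℝ) : Complex.arg ((x:ℂ) + Complex.I) ∈ Set.Ioo 0 π := by
  constructor
  · rcases eq_or_lt_of_le (Complex.arg_nonneg_iff.mpr (by simp : (0:ℝ) ≤ ((x:ℂ) + Complex.I).im))
      with h | h
    · exfalso
      have := Complex.arg_eq_zero_iff.mp h.symm
      simp at this
    · exact h
  · rcases eq_or_lt_of_le (Complex.arg_le_pi ((x:ℂ) + Complex.I)) with h | h
    · exfalso
      have := Complex.arg_eq_pi_iff.mp h
      simp at this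
    · exact h

private lemma cot_arg (x : ℝ) : Real.cot (Complex.arg ((x:ℂ) + Complex.I)) = x := by
  have hne := add_I_ne x
  have habs : 0 < ‖(x:ℂ) + Complex.I‖ := norm_pos_iff.mpr hne
  rw [Real.cot_eq_cos_div_sin, Complex.cos_arg hne, Complex.sin_arg]
  simp only [Complex.add_re, Complex.ofReal_re, Complex.I_re, add_zero,
    Complex.add_im, Complex.ofReal_im, Complex.I_im, zero_add]
  field_simp

private lemma arg_cot {θ : ℝ} (hθ : θ ∈ Set.Ioo 0 π) :
    Complex.arg ((Real.cot θ : ℂ) + Complex.I) = θ := by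
  have hs : 0 < Real.sin θ := Real.sin_pos_of_pos_of_lt_pi hθ.1 hθ.2
  have hsc : (Complex.sin (θ : ℂ)) ≠ 0 := by
    rw [← Complex.ofReal_sin]
    exact Complex.ofReal_ne_zero.mpr hs.ne'
  have h1 : ((Real.cot θ : ℂ) + Complex.I)
      = ((1/Real.sin θ : ℝ) : ℂ) * (Complex.cos θ + Complex.sin θ * Complex.I) := by
    rw [Real.cot_eq_cos_div_sin]
    push_cast
    field_simp
  rw [h1, Complex.arg_mul_cos_add_sin_mul_I (by positivity)
    ⟨by linarith [Real.pi_pos, hθ.1], hθ.2.le⟩]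

private lemma zero_iff (n : ℕ) (x : ℝ) :
    iteratedDeriv n (fun y : ℝ => 1 / (π * (1 + y ^ 2))) x = 0 ↔
      (((x:ℂ) - Complex.I) ^ (n+1)).im = 0 := by
  rw [cauchy_iter_formula]
  have hc : ((-1:ℝ)^n * (Nat.factorial n) / π) ≠ 0 := by
    apply div_ne_zero (mul_ne_zero (pow_ne_zero _ (by norm_num)) ?_) Real.pi_ne_zero
    exact_mod_cast Nat.factorial_ne_zero n
  have hw : ((x:ℂ) - Complex.I) ^ (n+1) ≠ 0 := pow_ne_zero _ (sub_I_ne x)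
  have hns : Complex.normSq (((x:ℂ) - Complex.I) ^ (n+1)) ≠ 0 := by
    simpa using hw
  simp only [mul_eq_zero, hc, false_or, Complex.inv_im, neg_div, neg_eq_zero,
    div_eq_zero_iff, hns, or_false]

private lemma theta_pos {n k : ℕ} (hk1 : 1 ≤ k) (hk2 : k ≤ n) :
    (k * π / (n+1) : ℝ) ∈ Set.Ioo 0 π := by
  have hπ := Real.pi_pos
  constructor
  · have : (1:ℝ) ≤ (k:ℝ) := by exact_mod_cast hk1
    positivity
  · rw [div_lt_iff₀ (by positivity)]
    have : (k:ℝ) < (n:ℝ) + 1 := by exact_mod_cast Nat.lt_succ_of_le hk2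
    nlinarith

private lemma zero_set_eq (n : ℕ) :
    {x : ℝ | (((x:ℂ) - Complex.I) ^ (n+1)).im = 0}
      = (fun k : ℕ => Real.cot (k * π / (n+1))) '' (Set.Icc 1 n) := by
  ext x
  simp only [Set.mem_setOf_eq, Set.mem_image, Set.mem_Icc]
  have hπ := Real.pi_pos
  constructor
  · intro hx
    set θ := Complex.arg ((x:ℂ) + Complex.I) with hθdef
    have hθ := arg_mem_Ioo x
    have hs : 0 < Real.sin θ := Real.sin_pos_of_pos_of_lt_pi hθ.1 hθ.2
    have hx' : x = Real.cot θ := (cot_arg x).symm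
    rw [hx', im_pow_cot hs.ne' (n+1)] at hx
    have hden : (0:ℝ) < (Real.sin θ)^(n+1) := by positivity
    have hsin : Real.sin ((n+1 : ℕ) * θ) = 0 := by
      rw [neg_div, neg_eq_zero, div_eq_zero_iff] at hx
      rcases hx with h | h
      · exact h
      · exact absurd h hden.ne'
    obtain ⟨k, hk⟩ := Real.sin_eq_zero_iff.mp hsin
    have hkr : (k : ℝ) * π = ((n:ℝ)+1) * θ := by push_cast at hk ⊢; linarith
    have hk0 : 0 < k := by
      by_contra h
      push_neg at h
      have : (k:ℝ) * π ≤ 0 := mul_nonpos_of_nonpos_of_nonneg (by exact_mod_cast h) hπ.le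
      nlinarith [hθ.1, hθ.2]
    have hkn : (k : ℤ) ≤ n := by
      by_contra h
      push_neg at h
      have h1 : ((n:ℝ) + 1) ≤ (k:ℝ) := by exact_mod_cast h
      nlinarith [hθ.2]
    refine ⟨k.toNat, ⟨?_, ?_⟩, ?_⟩
    · omega
    · omega
    · have hcast : ((k.toNat : ℕ) : ℝ) = (k : ℝ) := by exact_mod_cast Int.toNat_of_nonneg hk0.le
      have hθeq : θ = (k.toNat : ℝ) * π / (n+1) := by
        rw [hcast, eq_div_iff (by positivity : ((n:ℝ)+1) ≠ 0)]
        linarith [hkr]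
      rw [hx', hθeq]
  · rintro ⟨k, ⟨hk1, hk2⟩, rfl⟩
    have hθ := theta_pos (n := n) hk1 hk2
    have hs : 0 < Real.sin (k * π / (n+1)) := Real.sin_pos_of_pos_of_lt_pi hθ.1 hθ.2
    rw [im_pow_cot hs.ne' (n+1)]
    have heq : ((n+1 : ℕ) : ℝ) * ((k:ℝ) * π / (n+1)) = (k:ℝ) * π := by
      push_cast
      field_simp
    rw [heq, Real.sin_nat_mul_pi]
    simp

private lemma injOn_cot (n : ℕ) :
    Set.InjOn (fun k : ℕ => Real.cot (k * π / (n+1))) (Set.Icc 1 n) := by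
  rintro j ⟨hj1, hj2⟩ k ⟨hk1, hk2⟩ h
  have hθj := theta_pos (n := n) hj1 hj2
  have hθk := theta_pos (n := n) hk1 hk2
  have := congrArg (fun x : ℝ => Complex.arg ((x:ℂ) + Complex.I)) h
  simp only at this
  rw [arg_cot hθj, arg_cot hθk] at this
  have hπ := Real.pi_pos
  field_simp at this
  norm_cast at this

private lemma im_succ_ne (n : ℕ) {x : ℝ} (hx : (((x:ℂ) - Complex.I) ^ (n+1)).im = 0) :
    (((x:ℂ) - Complex.I) ^ (n+2)).im ≠ 0 := by
  set θ := Complex.arg ((x:ℂ) + Complex.I) with hθdef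
  have hθ := arg_mem_Ioo x
  have hs : 0 < Real.sin θ := Real.sin_pos_of_pos_of_lt_pi hθ.1 hθ.2
  have hx' : x = Real.cot θ := (cot_arg x).symm
  rw [hx', im_pow_cot hs.ne' (n+1)] at hx
  rw [hx', im_pow_cot hs.ne' (n+2)]
  have hden : (0:ℝ) < (Real.sin θ)^(n+1) := by positivity
  have hsin : Real.sin ((n+1 : ℕ) * θ) = 0 := by
    rw [neg_div, neg_eq_zero, div_eq_zero_iff] at hx
    rcases hx with h | h
    · exact h
    · exact absurd h hden.ne'
  obtain ⟨k, hk⟩ := Real.sin_eq_zero_iff.mp hsin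
  have h2 : ((n+2 : ℕ) : ℝ) * θ = θ + (k:ℝ) * π := by push_cast at hk ⊢; linarith
  rw [h2, Real.sin_add_int_mul_pi]
  have hne : ((-1:ℝ))^k * Real.sin θ ≠ 0 :=
    mul_ne_zero (zpow_ne_zero _ (by norm_num)) hs.ne'
  have hden2 : (Real.sin θ)^(n+2) ≠ 0 := by positivity
  rw [neg_div]
  exact neg_ne_zero.mpr (div_ne_zero hne hden2)

/-- The Cauchy density is bell-shaped: for every `n`, the `n`-th derivative of
`x ↦ 1/(π(1+x²))` has exactly `n` real zeros, all of them simple. -/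
theorem cauchy_density_bellShaped (n : ℕ) :
    {x : ℝ | iteratedDeriv n (fun y : ℝ => 1 / (π * (1 + y ^ 2))) x = 0}.Finite ∧
    {x : ℝ | iteratedDeriv n (fun y : ℝ => 1 / (π * (1 + y ^ 2))) x = 0}.ncard = n ∧
    (∀ x : ℝ, iteratedDeriv n (fun y : ℝ => 1 / (π * (1 + y ^ 2))) x = 0 →
      iteratedDeriv (n + 1) (fun y : ℝ => 1 / (π * (1 + y ^ 2))) x ≠ 0) := by
  have hset : {x : ℝ | iteratedDeriv n (fun y : ℝ => 1 / (π * (1 + y ^ 2))) x = 0}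
      = (fun k : ℕ => Real.cot (k * π / (n+1))) '' (Set.Icc 1 n) := by
    rw [← zero_set_eq]
    ext x
    exact zero_iff n x
  refine ⟨?_, ?_, ?_⟩
  · rw [hset]
    exact (Set.finite_Icc 1 n).image _
  · rw [hset, Set.ncard_image_of_injOn (injOn_cot n), ← Finset.coe_Icc,
      Set.ncard_coe_finset, Nat.card_Icc]
    omega
  · intro x hx
    rw [zero_iff] at hx
    exact fun h => im_succ_ne n hx ((zero_iff (n+1) x).mp h)
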